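/- Main theorem: Assume that for every positive integer n that is not a power of 2, the Collatz trajectories of n and 3n+2 coalesce (O⁺(n) ∩ O⁺(3n+2) ≠ ∅). Then every positive integer n that is not a power of 2 has property R, i.e., n = (2^(a_{k+1}) - ∑_{i=0}^{k} 2^(a_i)·3^(k-i)) / 3^(k+1) for some increasing sequence of naturals a_0 ≤ a_1 ≤ ⋯ ≤ a_{k+1}. -/

import Mathlib

def T (n : ℕ) : ℕ := if n % 2 = 0 then n / 2 else 3 * n + 1

def PropR (m : ℕ) : Prop :=
  ∃ k : ℕ, ∃ a : ℕ → ℕ,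
    (∀ i, i ≤ k → a i ≤ a (i + 1)) ∧
    (3 : ℤ) ^ (k + 1) * m =
      2 ^ a (k + 1) - ∑ i ∈ Finset.range (k + 1), 2 ^ a i * 3 ^ (k - i)

def Reach1 (n : ℕ) : Prop := ∃ j : ℕ, T^[j] n = 1

lemma T_even {n : ℕ} (h : n % 2 = 0) : T n = n / 2 := by simp [T, h]

lemma T_odd {n : ℕ} (h : n % 2 = 1) : T n = 3 * n + 1 := by simp [T, h]

lemma reach1_T {n : ℕ} (h : Reach1 n) : Reach1 (T n) := by
  obtain ⟨j, hj⟩ := h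
  cases j with
  | zero =>
    simp only [Function.iterate_zero, id] at hj
    subst hj
    exact ⟨2, by decide⟩
  | succ j =>
    exact ⟨j, by rwa [Function.iterate_succ_apply] at hj⟩

lemma reach1_iterate {n : ℕ} (s : ℕ) (h : Reach1 n) : Reach1 (T^[s] n) := by
  induction s with
  | zero => exact h
  | succ s ih => rw [Function.iterate_succ_apply']; exact reach1_T ih

lemma reach1_of_iterate {n s : ℕ} (h : Reach1 (T^[s] n)) : Reach1 n := by
  obtain ⟨t, ht⟩ := h
  exact ⟨t + s, by rwa [Function.iterate_add_apply]⟩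

lemma iterate_halve (e q : ℕ) (_hq : q % 2 = 1) : T^[e] (2 ^ e * q) = q := by
  induction e with
  | zero => simp
  | succ e ih =>
    rw [Function.iterate_succ_apply]
    have h2 : (2 ^ (e + 1) * q) % 2 = 0 := by
      have : 2 ∣ 2 ^ (e + 1) * q := Dvd.dvd.mul_right (dvd_pow_self 2 (Nat.succ_ne_zero e)) q
      omega
    rw [T_even h2]
    have hdiv : 2 ^ (e + 1) * q / 2 = 2 ^ e * q := by
      rw [show 2 ^ (e + 1) * q = 2 * (2 ^ e * q) by ring]
      exact Nat.mul_div_cancel_left _ (by norm_num)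
    rw [hdiv, ih]

lemma orbit_one (k : ℕ) : T^[k] 1 = 1 ∨ T^[k] 1 = 2 ∨ T^[k] 1 = 4 := by
  induction k with
  | zero => left; rfl
  | succ k ih =>
    rw [Function.iterate_succ_apply']
    rcases ih with h | h | h <;> rw [h] <;> decide

lemma propR_mul_pow2 (e q : ℕ) (h : PropR q) : PropR (2 ^ e * q) := by
  obtain ⟨k, a, hmono, heq⟩ := h
  refine ⟨k, fun i => a i + e, fun i hi => by
    show a i + e ≤ a (i + 1) + e
    have := hmono i hi; omega, ?_⟩
  push_cast
  have : ((2 : ℤ) ^ e) * ((3 : ℤ) ^ (k + 1) * q) =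
      2 ^ e * (2 ^ a (k + 1) - ∑ i ∈ Finset.range (k + 1), 2 ^ a i * 3 ^ (k - i)) := by
    rw [heq]
  rw [mul_sub, Finset.mul_sum] at this
  calc (3 : ℤ) ^ (k + 1) * (2 ^ e * q) = 2 ^ e * (3 ^ (k + 1) * q) := by ring
    _ = 2 ^ e * 2 ^ a (k + 1) - ∑ i ∈ Finset.range (k + 1), 2 ^ e * (2 ^ a i * 3 ^ (k - i)) := this
    _ = 2 ^ (a (k + 1) + e) - ∑ i ∈ Finset.range (k + 1), 2 ^ (a i + e) * 3 ^ (k - i) := by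
        congr 1
        · rw [pow_add]; ring
        · exact Finset.sum_congr rfl fun i _ => by rw [pow_add]; ring

lemma propR_of_odd_reach : ∀ j q : ℕ, q % 2 = 1 → 1 < q → T^[j] q = 1 → PropR q := by
  intro j
  induction j using Nat.strong_induction_on with
  | _ j ih =>
    intro q hodd hq1 hj
    -- 3q+1 = 2^e * q' with q' odd
    have h3 : 3 * q + 1 ≠ 0 := by omega
    obtain ⟨e, q', hq'odd, hfac⟩ := Nat.exists_eq_pow_mul_and_not_dvd h3 2 (by norm_num)
    have hq'odd' : q' % 2 = 1 := by omega
    have hTq : T q = 3 * q + 1 := T_odd hodd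
    have hiter : T^[e + 1] q = q' := by
      rw [Function.iterate_succ_apply, hTq, hfac, iterate_halve e q' hq'odd']
    have he1 : 1 ≤ e := by
      by_contra h
      have : e = 0 := by omega
      rw [this] at hfac
      simp at hfac
      omega
    by_cases hq'1 : q' = 1
    · -- 3q+1 = 2^e, base case: k = 0
      subst hq'1
      rw [mul_one] at hfac
      refine ⟨0, fun i => if i = 0 then 0 else e, ?_, ?_⟩
      · intro i hi
        interval_cases i
        simp
      · simp only [Finset.range_one, Finset.sum_singleton]
        norm_num
        have : (3 : ℤ) * q + 1 = 2 ^ e := by exact_mod_cast congrArg (Nat.cast : ℕ → ℤ) hfac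
        linarith
    · -- q' > 1, recurse
      have hq'gt : 1 < q' := by
        rcases Nat.lt_or_ge q' 2 with h | h
        · interval_cases q' <;> omega
        · omega
      have hjge : e + 1 ≤ j := by
        by_contra hlt
        push_neg at hlt
        -- then q' is in orbit of 1, but q' odd > 1 : contradiction
        have hx : q' = T^[e + 1 - j] 1 := by
          rw [← hj, ← Function.iterate_add_apply, ← hiter]
          congr 1
          omega
        rcases orbit_one (e + 1 - j) with h | h | h <;> omega
      have hj' : T^[j - (e + 1)] q' = 1 := by
        rw [← hiter, ← Function.iterate_add_apply]
        have : j - (e + 1) + (e + 1) = j := by omega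
        rw [this, hj]
      have hPR' : PropR q' := ih (j - (e + 1)) (by omega) q' hq'odd' hq'gt hj'
      obtain ⟨k, a, hmono, heq⟩ := hPR'
      refine ⟨k + 1, fun i => if i = 0 then 0 else a (i - 1) + e, ?_, ?_⟩
      · intro i hi
        cases i with
        | zero =>
          show (if (0:ℕ) = 0 then 0 else a (0 - 1) + e) ≤
            (if (0:ℕ) + 1 = 0 then 0 else a (0 + 1 - 1) + e)
          norm_num
        | succ i =>
          show (if i + 1 = 0 then 0 else a (i + 1 - 1) + e) ≤
            (if i + 1 + 1 = 0 then 0 else a (i + 1 + 1 - 1) + e)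
          rw [if_neg (by omega : ¬ i + 1 = 0), if_neg (by omega : ¬ i + 1 + 1 = 0)]
          simp only [Nat.add_sub_cancel]
          have := hmono i (by omega)
          omega
      · -- 3^(k+2) q = 2^(a(k+1)+e) - 3^(k+1) - ∑_{i=0}^{k} 2^(a i + e) 3^(k-i)
        have hcast : (3 : ℤ) * q + 1 = 2 ^ e * q' := by exact_mod_cast congrArg (Nat.cast : ℕ → ℤ) hfac
        have hsum : ∑ i ∈ Finset.range (k + 1 + 1),
            (2 : ℤ) ^ (if i = 0 then 0 else a (i - 1) + e) * 3 ^ (k + 1 - i)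
            = 3 ^ (k + 1) + ∑ i ∈ Finset.range (k + 1), 2 ^ (a i + e) * 3 ^ (k - i) := by
          rw [Finset.sum_range_succ']
          have hterm : ∀ i ∈ Finset.range (k + 1),
              (2:ℤ) ^ (if i + 1 = 0 then 0 else a (i + 1 - 1) + e) * 3 ^ (k + 1 - (i + 1))
              = 2 ^ (a i + e) * 3 ^ (k - i) := by
            intro i _
            rw [if_neg (Nat.succ_ne_zero i)]
            simp [Nat.succ_sub_succ]
          rw [Finset.sum_congr rfl hterm]
          have hbase : (2:ℤ) ^ (if (0:ℕ) = 0 then 0 else a (0 - 1) + e) * 3 ^ (k + 1 - 0)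
              = 3 ^ (k + 1) := by norm_num
          rw [hbase]
          ring
        rw [hsum]
        rw [show ((fun i => if i = 0 then 0 else a (i - 1) + e) (k + 1 + 1) : ℕ)
          = a (k + 1) + e from by norm_num]
        have key : (3 : ℤ) ^ (k + 1 + 1) * q = 2 ^ e * (3 ^ (k + 1) * q') - 3 ^ (k + 1) := by
          have : (3 : ℤ) ^ (k + 1 + 1) * q = 3 ^ (k + 1) * (3 * q + 1) - 3 ^ (k + 1) := by ring
          rw [this, hcast]; ring
        rw [key, heq]
        rw [mul_sub, Finset.mul_sum]
        have h1 : (2 : ℤ) ^ e * 2 ^ a (k + 1) = 2 ^ (a (k + 1) + e) := by rw [pow_add]; ring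
        rw [h1]
        have h2 : ∑ i ∈ Finset.range (k + 1), (2 : ℤ) ^ e * (2 ^ a i * 3 ^ (k - i))
            = ∑ i ∈ Finset.range (k + 1), 2 ^ (a i + e) * 3 ^ (k - i) :=
          Finset.sum_congr rfl fun i _ => by rw [pow_add]; ring
        rw [h2]
        ring

lemma reach1_all
    (hyp : ∀ n : ℕ, 0 < n → (∀ j : ℕ, n ≠ 2 ^ j) →
      (Set.range (fun k => T^[k] n) ∩ Set.range (fun k => T^[k] (3 * n + 2))).Nonempty) :
    ∀ n : ℕ, 0 < n → Reach1 n := by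
  intro n
  induction n using Nat.strong_induction_on with
  | _ n ih =>
    intro hn
    rcases Nat.lt_or_ge n 2 with h | h
    · have : n = 1 := by omega
      exact this ▸ ⟨0, rfl⟩
    rcases Nat.even_or_odd n with he | ho
    · -- even
      have h2 : n % 2 = 0 := Nat.even_iff.mp he
      have hlt : n / 2 < n := by omega
      have hpos : 0 < n / 2 := by omega
      have := ih (n / 2) hlt hpos
      obtain ⟨j, hj⟩ := this
      exact ⟨j + 1, by rw [Function.iterate_succ_apply, T_even h2, hj]⟩
    · -- odd, n ≥ 3, n = 2m+1
      have hodd : n % 2 = 1 := Nat.odd_iff.mp ho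
      set m := n / 2 with hm
      have hn2 : n = 2 * m + 1 := by omega
      have hm1 : 1 ≤ m := by omega
      -- T^[2] n = 3m + 2
      have hT2 : T^[2] n = 3 * m + 2 := by
        have h1 : T n = 3 * n + 1 := T_odd hodd
        have h2 : (3 * n + 1) % 2 = 0 := by omega
        show T (T n) = 3 * m + 2
        rw [h1, T_even h2]
        omega
      have key : Reach1 (3 * m + 2) := by
        rcases eq_or_lt_of_le hm1 with h1 | h2
        · -- m = 1, n = 3, 3m+2 = 5
          have : m = 1 := h1.symm
          rw [this]
          exact ⟨5, by decide⟩
        · by_cases hp2 : ∃ j, m = 2 ^ j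
          · obtain ⟨j, hj⟩ := hp2
            have hj1 : 1 ≤ j := by
              by_contra hc
              have : j = 0 := by omega
              rw [this] at hj; omega
            -- T (3m+2) = 3*2^(j-1)+1 < n
            have hval : 3 * m + 2 = 2 * (3 * 2 ^ (j - 1) + 1) := by
              have : m = 2 * 2 ^ (j - 1) := by
                rw [hj]
                rw [← pow_succ']
                congr 1
                omega
              omega
            have hTv : T (3 * m + 2) = 3 * 2 ^ (j - 1) + 1 := by
              rw [hval, T_even (by omega)]
              omega
            have hlt : 3 * 2 ^ (j - 1) + 1 < n := by
              have : m = 2 * 2 ^ (j - 1) := by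
                rw [hj, ← pow_succ']
                congr 1
                omega
              omega
            have hr : Reach1 (3 * 2 ^ (j - 1) + 1) := ih _ hlt (by positivity)
            have : Reach1 (T^[1] (3 * m + 2)) := by
              simpa [hTv] using hr
            exact reach1_of_iterate this
          · push_neg at hp2
            obtain ⟨v, ⟨s, hs⟩, ⟨t, ht⟩⟩ := hyp m (by omega) hp2
            have hs' : T^[s] m = v := hs
            have ht' : T^[t] (3 * m + 2) = v := ht
            have hrm : Reach1 m := ih m (by omega) (by omega)
            have hrv : Reach1 v := hs' ▸ reach1_iterate s hrm
            exact reach1_of_iterate (n := 3 * m + 2) (s := t) (ht' ▸ hrv)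
      obtain ⟨j, hj⟩ := key
      rw [← hT2] at hj
      rw [← Function.iterate_add_apply] at hj
      exact ⟨j + 2, hj⟩

theorem stmt15
    (hyp : ∀ n : ℕ, 0 < n → (∀ j : ℕ, n ≠ 2 ^ j) →
      (Set.range (fun k => T^[k] n) ∩ Set.range (fun k => T^[k] (3 * n + 2))).Nonempty) :
    ∀ n : ℕ, 0 < n → (∀ j : ℕ, n ≠ 2 ^ j) → PropR n := by
  intro n hn hnp
  obtain ⟨e, q, hqodd, hfac⟩ := Nat.exists_eq_pow_mul_and_not_dvd hn.ne' 2 (by norm_num)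
  have hq2 : q % 2 = 1 := by omega
  have hq1 : 1 < q := by
    rcases Nat.lt_or_ge q 2 with h | h
    · interval_cases q
      · simp at hfac; omega
      · rw [mul_one] at hfac
        exact absurd hfac (hnp e)
    · omega
  have hrn : Reach1 n := reach1_all hyp n hn
  have hiter : T^[e] n = q := by rw [hfac]; exact iterate_halve e q hq2
  have hrq : Reach1 q := hiter ▸ reach1_iterate e hrn
  obtain ⟨j, hj⟩ := hrq
  have hPq : PropR q := propR_of_odd_reach j q hq2 hq1 hj
  rw [hfac]
  exact propR_mul_pow2 e q hPq
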